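/- Let X₁,…,Xₙ be ℕ-valued random variables on a probability space with S = X₁+⋯+Xₙ and S₋₁ = X₂+⋯+Xₙ. Suppose X₁ follows a Katz distribution with parameters a and b, where |a| < 1 and b > 0, and that X₁ is independent of S₋₁. Then for every integer k ≥ 1, the expected cumulative allocation satisfies E[X₁ · 1_{\{S≤k\}}] = (a+b) · ∑_{j=0}^{k−1} a^j · P(S ≤ k−1−j). -/

import Mathlib

open MeasureTheory ProbabilityTheory

/-- If `X₁` follows a Katz distribution with parameters `|a| < 1`, `b > 0`
and is independent of `S₋₁`, then for every `k ≥ 1`,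
`E[X₁ · 1_{S≤k}] = (a+b) ∑_{j=0}^{k-1} a^j P(S ≤ k-1-j)`. -/
theorem expected_cumulative_allocation_katz
    {Ω : Type*} [MeasurableSpace Ω] (μ : Measure Ω) [IsProbabilityMeasure μ]
    (n : ℕ) (X : Fin (n + 1) → Ω → ℕ) (hX : ∀ i, Measurable (X i))
    (S Sm : Ω → ℕ)
    (hS : ∀ ω, S ω = ∑ i, X i ω)
    (hSm : ∀ ω, Sm ω = ∑ i : Fin n, X i.succ ω)
    (a b : ℝ) (ha : |a| < 1) (hb : 0 < b)
    (hkatz : ∀ k : ℕ, (μ {ω | X 0 ω = k + 1}).toReal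
      = (a + b / (k + 1)) * (μ {ω | X 0 ω = k}).toReal)
    (hindep : IndepFun (X 0) Sm μ) :
    ∀ k : ℕ, 1 ≤ k →
      ∫ ω in {ω | S ω ≤ k}, (X 0 ω : ℝ) ∂μ
        = (a + b) * ∑ j ∈ Finset.range k, a ^ j * (μ {ω | S ω ≤ k - 1 - j}).toReal := by
  have hmX : Measurable (X 0) := hX 0
  have hmS : Measurable S := by
    have h : S = fun ω => ∑ i, X i ω := funext hS
    rw [h]; exact Finset.measurable_sum _ fun i _ => hX i
  have hmY : Measurable Sm := by
    have h : Sm = fun ω => ∑ i : Fin n, X i.succ ω := funext hSm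
    rw [h]; exact Finset.measurable_sum _ fun i _ => hX i.succ
  have hSXY : ∀ ω, S ω = X 0 ω + Sm ω := by
    intro ω; rw [hS, hSm, Fin.sum_univ_succ]
  set f : ℕ → ℝ := fun m => (μ {ω | X 0 ω = m}).toReal with hf
  set G : ℕ → ℝ := fun t => (μ {ω | Sm ω ≤ t}).toReal with hG
  set H : ℕ → ℝ := fun k => (μ {ω | S ω ≤ k}).toReal with hH
  -- measurability of pieces
  have hmsX : ∀ m : ℕ, MeasurableSet {ω | X 0 ω = m} := fun m =>
    hmX (measurableSet_singleton m)
  have hmsS : ∀ k : ℕ, MeasurableSet {ω | S ω ≤ k} := fun k =>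
    hmS measurableSet_Iic
  -- independence product
  have hmul : ∀ m t : ℕ, (μ ({ω | X 0 ω = m} ∩ {ω | Sm ω ≤ t})).toReal = f m * G t := by
    intro m t
    have h1 : {ω | X 0 ω = m} = X 0 ⁻¹' {m} := rfl
    have h2 : {ω | Sm ω ≤ t} = Sm ⁻¹' Set.Iic t := rfl
    rw [h1, h2, hindep.measure_inter_preimage_eq_mul _ _ (measurableSet_singleton m)
      measurableSet_Iic, ENNReal.toReal_mul]
    rfl
  -- pieces of {S ≤ k}
  have hpiece : ∀ k m : ℕ, m ≤ k →
      {ω | X 0 ω = m} ∩ {ω | S ω ≤ k} = {ω | X 0 ω = m} ∩ {ω | Sm ω ≤ k - m} := by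
    intro k m hm
    ext ω
    simp only [Set.mem_inter_iff, Set.mem_setOf_eq]
    constructor
    · rintro ⟨h1, h2⟩
      rw [hSXY ω, h1] at h2
      exact ⟨h1, by omega⟩
    · rintro ⟨h1, h2⟩
      refine ⟨h1, ?_⟩
      rw [hSXY ω, h1]; omega
  have hunion : ∀ k : ℕ, {ω | S ω ≤ k}
      = ⋃ m ∈ Finset.range (k + 1), ({ω | X 0 ω = m} ∩ {ω | S ω ≤ k}) := by
    intro k
    ext ω
    simp only [Set.mem_iUnion, Set.mem_inter_iff, Set.mem_setOf_eq, Finset.mem_range]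
    constructor
    · intro hω
      refine ⟨X 0 ω, ?_, rfl, hω⟩
      have := hSXY ω; omega
    · rintro ⟨m, -, -, hω⟩; exact hω
  have hdisj : ∀ k : ℕ, Set.Pairwise ((Finset.range (k + 1) : Finset ℕ) : Set ℕ)
      (Function.onFun Disjoint fun m => {ω | X 0 ω = m} ∩ {ω | S ω ≤ k}) := by
    intro k m _ m' _ hmm'
    refine Set.disjoint_left.2 ?_
    rintro ω ⟨h1, -⟩ ⟨h2, -⟩
    exact hmm' (h1 ▸ h2 ▸ rfl)
  -- H as a convolution sum
  have hH_eq : ∀ k : ℕ, H k = ∑ m ∈ Finset.range (k + 1), f m * G (k - m) := by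
    intro k
    have h := measure_biUnion_finset (hdisj k)
      (fun m _ => (hmsX m).inter (hmsS k)) (μ := μ)
    rw [hH]
    simp only
    rw [hunion k, h, ENNReal.toReal_sum (fun m _ => measure_ne_top μ _)]
    refine Finset.sum_congr rfl fun m hm => ?_
    rw [hpiece k m (by simpa using Nat.lt_succ_iff.1 (Finset.mem_range.1 hm)), hmul]
  -- integral as a sum
  have hT : ∀ k : ℕ, ∫ ω in {ω | S ω ≤ k}, (X 0 ω : ℝ) ∂μ
      = ∑ m ∈ Finset.range (k + 1), (m : ℝ) * (f m * G (k - m)) := by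
    intro k
    have hint : ∀ m ∈ Finset.range (k + 1),
        IntegrableOn (fun ω => (X 0 ω : ℝ)) ({ω | X 0 ω = m} ∩ {ω | S ω ≤ k}) μ := by
      intro m _
      refine (integrableOn_const (C := (m : ℝ)) (measure_ne_top μ _)).congr_fun
        (fun ω hω => ?_) ((hmsX m).inter (hmsS k))
      simp only [Set.mem_inter_iff, Set.mem_setOf_eq] at hω
      show ((m : ℝ)) = (X 0 ω : ℝ)
      rw [hω.1]
    rw [hunion k, MeasureTheory.integral_biUnion_finset _
      (fun m _ => (hmsX m).inter (hmsS k)) (hdisj k) hint]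
    refine Finset.sum_congr rfl fun m hm => ?_
    have hm' : m ≤ k := Nat.lt_succ_iff.1 (Finset.mem_range.1 hm)
    rw [setIntegral_congr_fun ((hmsX m).inter (hmsS k))
      (fun ω hω => by
        simp only [Set.mem_inter_iff, Set.mem_setOf_eq] at hω
        show (X 0 ω : ℝ) = (m : ℝ)
        rw [hω.1] : Set.EqOn (fun ω => (X 0 ω : ℝ)) (fun _ => (m : ℝ)) _),
      setIntegral_const, hpiece k m hm', smul_eq_mul, mul_comm, measureReal_def, hmul]
  -- abbreviation for the sum
  set T : ℕ → ℝ := fun k => ∑ m ∈ Finset.range (k + 1), (m : ℝ) * (f m * G (k - m)) with hTdef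
  -- recursion
  have hrec : ∀ k : ℕ, T (k + 1) = a * T k + (a + b) * H k := by
    intro k
    have h1 : T (k + 1)
        = ∑ l ∈ Finset.range (k + 1), ((l : ℝ) + 1) * (f (l + 1) * G (k - l)) := by
      rw [hTdef]
      simp only
      rw [Finset.sum_range_succ']
      simp only [Nat.cast_zero, zero_mul, add_zero, Nat.cast_add, Nat.cast_one]
      refine Finset.sum_congr rfl fun l _ => ?_
      have hsub : k + 1 - (l + 1) = k - l := by omega
      rw [hsub]
    rw [h1, hH_eq k]
    have h2 : ∀ l : ℕ, ((l : ℝ) + 1) * f (l + 1) = a * l * f l + (a + b) * f l := by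
      intro l
      have hne : ((l : ℝ) + 1) ≠ 0 := by positivity
      have hfl : f (l + 1) = (a + b / (l + 1)) * f l := hkatz l
      rw [hfl]
      field_simp
      ring
    rw [Finset.mul_sum, Finset.mul_sum, ← Finset.sum_add_distrib]
    refine Finset.sum_congr rfl fun l _ => ?_
    rw [← mul_assoc, h2 l]
    ring
  -- closed form by induction
  have hclosed : ∀ k : ℕ, T (k + 1)
      = (a + b) * ∑ j ∈ Finset.range (k + 1), a ^ j * H (k - j) := by
    intro k
    induction k with
    | zero =>
      rw [hrec 0]
      have hT0 : T 0 = 0 := by simp [hTdef]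
      simp [hT0]
    | succ k ih =>
      rw [hrec (k + 1), ih]
      rw [Finset.sum_range_succ' (fun j => a ^ j * H (k + 1 - j)) (k + 1)]
      simp only [pow_zero, one_mul, Nat.sub_zero, pow_succ]
      have hsub : ∀ j : ℕ, k + 1 - (j + 1) = k - j := fun j => by omega
      rw [Finset.mul_sum, Finset.mul_sum]
      have hr : ∑ x ∈ Finset.range (k + 1), a ^ x * a * H (k + 1 - (x + 1))
          = ∑ x ∈ Finset.range (k + 1), a ^ x * a * H (k - x) :=
        Finset.sum_congr rfl fun x _ => by rw [hsub x]
      rw [hr, mul_add, Finset.mul_sum]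
      refine congrArg₂ (· + ·) (Finset.sum_congr rfl fun i _ => by ring) rfl
  -- conclude
  rintro k hk
  obtain ⟨k', rfl⟩ : ∃ k', k = k' + 1 := ⟨k - 1, by omega⟩
  have hTk : ∫ ω in {ω | S ω ≤ (k' + 1 : ℕ)}, (X 0 ω : ℝ) ∂μ = T (k' + 1) := hT (k' + 1)
  rw [hTk, hclosed k']
  refine congrArg _ (Finset.sum_congr rfl fun j _ => ?_)
  have h : k' + 1 - 1 - j = k' - j := by omega
  rw [h]
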